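/- The relative elementary orthogonal group EO_{2n}(R, I) is generated as a group by the elements g·oe_{ij}(x)·g^{-1}, where g ∈ EO_{2n}(R), x ∈ I, and either i = 1 or j = 1. -/

import Mathlib

open Matrix

/-- The permutation σ of the index set {1,…,2n}, encoded as `Fin n × Fin 2`,
which swaps 2i−1 and 2i. The index 1 corresponds to ((0 : Fin n), (0 : Fin 2)). -/
def sw {n : ℕ} (p : Fin n × Fin 2) : Fin n × Fin 2 := (p.1, 1 - p.2)

/-- The elementary orthogonal generator oe_{ij}(z) = I + z e_{ij} − z e_{σ(j)σ(i)}. -/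
def oe {n : ℕ} (R : Type*) [CommRing R] (i j : Fin n × Fin 2) (z : R) :
    Matrix (Fin n × Fin 2) (Fin n × Fin 2) R :=
  1 + z • Matrix.single i j (1 : R) - z • Matrix.single (sw j) (sw i) (1 : R)

variable (n : ℕ) (R : Type*) [CommRing R]

/-- The elementary orthogonal group EO_{2n}(R), generated by the elementary
orthogonal matrices oe_{ij}(z), z ∈ R, i ≠ j, i ≠ σ(j). -/
def EO : Subgroup (GL (Fin n × Fin 2) R) :=
  Subgroup.closure {g | ∃ i j : Fin n × Fin 2, ∃ z : R, i ≠ j ∧ i ≠ sw j ∧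
    (g : Matrix (Fin n × Fin 2) (Fin n × Fin 2) R) = oe R i j z}

/-- The group EO_{2n}(I), generated by the oe_{ij}(x) with x ∈ I. -/
def EOI (I : Ideal R) : Subgroup (GL (Fin n × Fin 2) R) :=
  Subgroup.closure {g | ∃ i j : Fin n × Fin 2, ∃ x : R, x ∈ I ∧ i ≠ j ∧ i ≠ sw j ∧
    (g : Matrix (Fin n × Fin 2) (Fin n × Fin 2) R) = oe R i j x}

/-- The relative elementary orthogonal group EO_{2n}(R, I): the normal closure of
EO_{2n}(I) in EO_{2n}(R). -/
def EORel (I : Ideal R) : Subgroup (GL (Fin n × Fin 2) R) :=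
  Subgroup.closure {g | ∃ e ∈ EO n R, ∃ h ∈ EOI n R I, g = e * h * e⁻¹}

/-- The group EO^1_{2n}(R,I), generated by oe_{1i}(a) (a ∈ R) and oe_{j1}(x) (x ∈ I)
for indices i, j ∈ {3,…,2n}, i.e. indices whose first coordinate is nonzero. -/
def EO1 (I : Ideal R) [NeZero n] : Subgroup (GL (Fin n × Fin 2) R) :=
  Subgroup.closure {g | ∃ p : Fin n × Fin 2, p.1 ≠ 0 ∧
    ((∃ a : R, (g : Matrix (Fin n × Fin 2) (Fin n × Fin 2) R) = oe R (0, 0) p a) ∨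
      (∃ x ∈ I, (g : Matrix (Fin n × Fin 2) (Fin n × Fin 2) R) = oe R p (0, 0) x))}

/-! ### Auxiliary lemmas -/

lemma sw_sw {n : ℕ} (p : Fin n × Fin 2) : sw (sw p) = p := by
  rcases p with ⟨a, b⟩; simp only [sw]; congr 1; fin_cases b <;> rfl

lemma sw_ne_self {n : ℕ} (p : Fin n × Fin 2) : sw p ≠ p := by
  rcases p with ⟨a, b⟩; simp only [sw, ne_eq, Prod.mk.injEq]; rintro ⟨-, h⟩
  fin_cases b <;> simp_all

lemma sw_inj {n : ℕ} {p q : Fin n × Fin 2} (h : sw p = sw q) : p = q := by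
  have := congrArg sw h; rwa [sw_sw, sw_sw] at this

lemma sw_ne_sw {n : ℕ} {p q : Fin n × Fin 2} (h : p ≠ q) : sw p ≠ sw q := fun hh => h (sw_inj hh)

lemma eq_sw_comm {n : ℕ} {p q : Fin n × Fin 2} : p = sw q ↔ sw p = q := by
  constructor
  · rintro rfl; exact sw_sw q
  · rintro rfl; exact (sw_sw p).symm

lemma ne_sw_comm {n : ℕ} {p q : Fin n × Fin 2} (h : p ≠ sw q) : sw p ≠ q :=
  fun hh => h (eq_sw_comm.mpr hh)

lemma sw00 {n : ℕ} [NeZero n] : sw ((0, 0) : Fin n × Fin 2) = (0, 1) := rfl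

lemma sw01 {n : ℕ} [NeZero n] : sw ((0, 1) : Fin n × Fin 2) = (0, 0) := rfl

lemma index_cases {n : ℕ} [NeZero n] (p : Fin n × Fin 2) :
    p = (0, 0) ∨ p = (0, 1) ∨ p.1 ≠ 0 := by
  rcases p with ⟨a, b⟩
  by_cases h : a = 0
  · subst h; fin_cases b
    · exact Or.inl rfl
    · exact Or.inr (Or.inl rfl)
  · exact Or.inr (Or.inr h)

section MatrixLemmas

variable {n : ℕ} {R : Type*} [CommRing R]

lemma oe_zero (i j : Fin n × Fin 2) : oe R i j (0 : R) = 1 := by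
  simp [oe]

lemma oe_mul_oe (i j : Fin n × Fin 2) (hij : i ≠ j) (x y : R) :
    oe R i j x * oe R i j y = oe R i j (x + y) := by
  have hji : sw i ≠ sw j := fun h => hij (sw_inj h)
  have h1 : j ≠ sw j := Ne.symm (sw_ne_self j)
  have h2 : sw i ≠ i := sw_ne_self i
  unfold oe
  simp only [sub_eq_add_neg, mul_add, add_mul, mul_neg, neg_mul, mul_one, one_mul,
    smul_mul_assoc, mul_smul_comm, smul_smul, neg_neg, smul_neg,
    Matrix.single_mul_single_of_ne (1:R) i j _ hij.symm, Matrix.single_mul_single_of_ne (1:R) i j _ h1,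
    Matrix.single_mul_single_of_ne (1:R) (sw j) (sw i) _ h2,
    Matrix.single_mul_single_of_ne (1:R) (sw j) (sw i) _ hji,
    smul_zero, add_zero, neg_zero, zero_add, add_smul]
  abel

lemma oe_flip (i j : Fin n × Fin 2) (x : R) :
    oe R i j x = oe R (sw j) (sw i) (-x) := by
  unfold oe
  rw [sw_sw, sw_sw]
  module

lemma oe_comm_rel (i j k : Fin n × Fin 2) (hij : i ≠ j) (hik : i ≠ k) (hjk : j ≠ k)
    (hisj : i ≠ sw j) (hisk : i ≠ sw k) (hjsk : j ≠ sw k) (a b : R) :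
    oe R i k a * oe R k j b = oe R i j (a * b) * (oe R k j b * oe R i k a) := by
  have e1 : k ≠ sw j := fun h => (ne_sw_comm hjsk) h.symm
  have e2 : sw i ≠ k := ne_sw_comm hisk
  have e3 : sw i ≠ sw j := sw_ne_sw hij
  have e4 : j ≠ i := hij.symm
  have e5 : sw k ≠ i := hisk.symm
  have e6 : j ≠ sw j := Ne.symm (sw_ne_self j)
  have e7 : sw i ≠ i := sw_ne_self i
  have e8 : sw i ≠ sw k := sw_ne_sw hik
  have e9 : k ≠ i := hik.symm
  have e10 : sw k ≠ sw j := sw_ne_sw hjk.symm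
  unfold oe
  simp only [sub_eq_add_neg, mul_add, add_mul, mul_neg, neg_mul, mul_one, one_mul, neg_neg,
    smul_mul_assoc, mul_smul_comm, smul_smul, smul_neg, neg_smul,
    Matrix.single_mul_single_same, Matrix.single_mul_single_of_ne,
    e1, e2, e3, e4, e5, e6, e7, e8, e9, e10, hij, hik, hjk, hisj, hisk, hjsk,
    ne_eq, not_false_eq_true, smul_zero, add_zero, neg_zero, zero_add, mul_one]
  module

/-- The elementary orthogonal matrix as an element of GL. -/
def oeUnit (i j : Fin n × Fin 2) (hij : i ≠ j) (x : R) : GL (Fin n × Fin 2) R :=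
  ⟨oe R i j x, oe R i j (-x),
    by rw [oe_mul_oe i j hij, add_neg_cancel, oe_zero],
    by rw [oe_mul_oe i j hij, neg_add_cancel, oe_zero]⟩

@[simp] lemma oeUnit_coe (i j : Fin n × Fin 2) (hij : i ≠ j) (x : R) :
    ((oeUnit i j hij x : GL (Fin n × Fin 2) R) :
      Matrix (Fin n × Fin 2) (Fin n × Fin 2) R) = oe R i j x := rfl

@[simp] lemma oeUnit_inv_coe (i j : Fin n × Fin 2) (hij : i ≠ j) (x : R) :
    (((oeUnit i j hij x)⁻¹ : GL (Fin n × Fin 2) R) :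
      Matrix (Fin n × Fin 2) (Fin n × Fin 2) R) = oe R i j (-x) := rfl

end MatrixLemmas

/-- EO_{2n}(R,I) is generated by the elements g · oe_{ij}(x) · g⁻¹ with
g ∈ EO_{2n}(R), x ∈ I, and i = 1 or j = 1. -/
theorem EORel_eq_closure_conjugates_first_index (I : Ideal R) (hn : 3 ≤ n) [NeZero n] :
    EORel n R I =
      Subgroup.closure {g | ∃ e ∈ EO n R, ∃ i j : Fin n × Fin 2, ∃ x ∈ I,
        (i = (0, 0) ∨ j = (0, 0)) ∧ i ≠ j ∧ i ≠ sw j ∧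
        ∃ u : GL (Fin n × Fin 2) R,
          (u : Matrix (Fin n × Fin 2) (Fin n × Fin 2) R) = oe R i j x ∧
          g = e * u * e⁻¹} := by
  set S : Set (GL (Fin n × Fin 2) R) := {g | ∃ e ∈ EO n R, ∃ i j : Fin n × Fin 2, ∃ x ∈ I,
        (i = (0, 0) ∨ j = (0, 0)) ∧ i ≠ j ∧ i ≠ sw j ∧
        ∃ u : GL (Fin n × Fin 2) R,
          (u : Matrix (Fin n × Fin 2) (Fin n × Fin 2) R) = oe R i j x ∧
          g = e * u * e⁻¹} with hS
  apply le_antisymm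
  · -- EORel ≤ closure S
    -- the key claim: conjugates of elements of EOI lie in closure S
    have key : ∀ h ∈ EOI n R I, ∀ e ∈ EO n R, e * h * e⁻¹ ∈ Subgroup.closure S := by
      intro h hh
      refine Subgroup.closure_induction ?_ ?_ ?_ ?_ hh
      · -- generators of EOI
        rintro u ⟨i, j, x, hx, hij, hisj, hu⟩ e he
        -- case analysis on i and j
        by_cases hi00 : i = (0, 0)
        · exact Subgroup.subset_closure ⟨e, he, i, j, x, hx, Or.inl hi00, hij, hisj, u, hu, rfl⟩
        by_cases hj00 : j = (0, 0)
        · exact Subgroup.subset_closure ⟨e, he, i, j, x, hx, Or.inr hj00, hij, hisj, u, hu, rfl⟩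
        rcases index_cases i with hi | hi | hi
        · exact absurd hi hi00
        · -- i = (0,1) : flip, new second index is (0,0)
          subst hi
          refine Subgroup.subset_closure ⟨e, he, sw j, (0, 0), -x, I.neg_mem hx,
            Or.inr rfl, ?_, ?_, u, ?_, rfl⟩
          · intro hc
            exact hij (by rw [← sw_sw j, hc, sw00])
          · rw [sw00]
            exact fun hc => hisj hc.symm
          · rw [hu, oe_flip, sw01]
        rcases index_cases j with hj | hj | hj
        · exact absurd hj hj00
        · -- j = (0,1) : flip, new first index is (0,0)
          subst hj
          refine Subgroup.subset_closure ⟨e, he, (0, 0), sw i, -x, I.neg_mem hx,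
            Or.inl rfl, ?_, ?_, u, ?_, rfl⟩
          · intro hc
            exact hij (by rw [← sw_sw i, ← hc, sw00])
          · rw [sw_sw]
            exact fun hc => hi00 hc.symm
          · rw [hu, oe_flip, sw01]
        · -- both i.1 ≠ 0 and j.1 ≠ 0 : use the commutator trick with k = (0,0)
          set k : Fin n × Fin 2 := (0, 0) with hk
          have hik : i ≠ k := fun hc => hi (by rw [hc])
          have hjk : j ≠ k := fun hc => hj (by rw [hc])
          have hisk : i ≠ sw k := fun hc => hi (by rw [hc, sw00])
          have hjsk : j ≠ sw k := fun hc => hj (by rw [hc, sw00])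
          have hkj : k ≠ j := hjk.symm
          have hksj : k ≠ sw j := fun hc => hj (by rw [← sw_sw j, ← hc, sw00])
          set U1 : GL (Fin n × Fin 2) R := oeUnit i k hik (1 : R) with hU1
          set U2 : GL (Fin n × Fin 2) R := oeUnit k j hkj x with hU2
          set W : GL (Fin n × Fin 2) R := oeUnit i j hij x with hW
          have hcomm : U1 * U2 = W * (U2 * U1) := by
            apply Units.ext
            simp only [Units.val_mul, hU1, hU2, hW, oeUnit_coe]
            have := oe_comm_rel i j k hij hik hjk hisj hisk hjsk (1 : R) x
            rwa [one_mul] at this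
          have hu' : u = W := by
            apply Units.ext
            rw [hu, hW, oeUnit_coe]
          have hcomm2 : u = U1 * U2 * U1⁻¹ * U2⁻¹ := by
            rw [hu', hcomm]
            group
          have hsplit : e * u * e⁻¹ = ((e * U1) * U2 * (e * U1)⁻¹) * (e * U2⁻¹ * e⁻¹) := by
            rw [hcomm2]
            group
          rw [hsplit]
          have hU1EO : U1 ∈ EO n R :=
            Subgroup.subset_closure ⟨i, k, 1, hik, hisk, rfl⟩
          have mem1 : (e * U1) * U2 * (e * U1)⁻¹ ∈ Subgroup.closure S :=
            Subgroup.subset_closure ⟨e * U1, mul_mem he hU1EO, k, j, x, hx,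
              Or.inl rfl, hkj, hksj, U2, rfl, rfl⟩
          have mem2 : e * U2⁻¹ * e⁻¹ ∈ Subgroup.closure S :=
            Subgroup.subset_closure ⟨e, he, k, j, -x, I.neg_mem hx,
              Or.inl rfl, hkj, hksj, U2⁻¹, rfl, rfl⟩
          exact mul_mem mem1 mem2
      · intro e _
        simpa using one_mem _
      · intro a b _ _ pa pb e he
        have : e * (a * b) * e⁻¹ = (e * a * e⁻¹) * (e * b * e⁻¹) := by group
        rw [this]
        exact mul_mem (pa e he) (pb e he)
      · intro a _ pa e he
        have : e * a⁻¹ * e⁻¹ = (e * a * e⁻¹)⁻¹ := by group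
        rw [this]
        exact inv_mem (pa e he)
    rw [EORel]
    refine (Subgroup.closure_le _).mpr ?_
    rintro g ⟨e, he, h, hh, rfl⟩
    exact key h hh e he
  · -- closure S ≤ EORel
    refine (Subgroup.closure_le _).mpr ?_
    rintro g ⟨e, he, i, j, x, hx, _, hij, hisj, u, hu, rfl⟩
    have huEOI : u ∈ EOI n R I := Subgroup.subset_closure ⟨i, j, x, hx, hij, hisj, hu⟩
    exact Subgroup.subset_closure ⟨e, he, u, huEOI, rfl⟩
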